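/- Let n ≥ 3 be an integer. Then the coefficient of the monomial T_2·T_n² in R_{n+1} equals −n(n+1); that is, c_{(n,n,2)}^{(n+1)} = −n(n+1). -/
import Mathlib


open MvPolynomial

noncomputable section

/-- Linear extension to polynomials of a map defined on exponent vectors (monomials). -/
def extendMon (f : (ℕ →₀ ℕ) → MvPolynomial ℕ ℝ) (P : MvPolynomial ℕ ℝ) :
    MvPolynomial ℕ ℝ :=
  ∑ d ∈ P.support, P.coeff d • f d

/-- Action of `D₁` on the monomial with exponent vector `d`. -/
def D1mon (d : ℕ →₀ ℕ) : MvPolynomial ℕ ℝ :=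
  ∑ i ∈ d.support,
    (d i : ℝ) • monomial (d - Finsupp.single i 1 + Finsupp.single (i + 1) 1) (1 : ℝ)

/-- Action of `D₂` on the monomial with exponent vector `d`. -/
def D2mon (d : ℕ →₀ ℕ) : MvPolynomial ℕ ℝ :=
  ∑ i ∈ d.support,
    (d i : ℝ) • monomial (d - Finsupp.single i 1 + Finsupp.single (i + 2) 1) (1 : ℝ)

def D1op : MvPolynomial ℕ ℝ → MvPolynomial ℕ ℝ := extendMon D1mon

def D2op : MvPolynomial ℕ ℝ → MvPolynomial ℕ ℝ := extendMon D2mon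

/-- The operator `L = (D₁ ∘ D₁ - D₂)/2`. -/
def Lop (P : MvPolynomial ℕ ℝ) : MvPolynomial ℕ ℝ :=
  (1 / 2 : ℝ) • (D1op (D1op P) - D2op P)

/-- Action of `H` on the monomial with exponent vector `d`. -/
def Hmon (d : ℕ →₀ ℕ) : MvPolynomial ℕ ℝ :=
  (-(1 / 2) : ℝ) • ∑ i ∈ d.support, ∑ l ∈ Finset.Ico 1 i,
    ((d i : ℝ) * (i.choose l : ℝ)) •
      monomial (d - Finsupp.single i 1 + Finsupp.single (1 + l) 1
        + Finsupp.single (1 + i - l) 1) (1 : ℝ)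

def Hop : MvPolynomial ℕ ℝ → MvPolynomial ℕ ℝ := extendMon Hmon

/-- `A_n = -∑_{k=1}^{n-1} C(n,k) T_{1+k} T_{1+n-k} T_n`. -/
def Apoly (n : ℕ) : MvPolynomial ℕ ℝ :=
  - ∑ k ∈ Finset.Ico 1 n, (n.choose k : ℝ) • (X (1 + k) * X (1 + n - k) * X n)

/-- The polynomials `R_n`: `R_2 = 0` and `R_{n+1} = A_n + L(R_n) + H(R_n)` for `n ≥ 2`. -/
def Rpoly : ℕ → MvPolynomial ℕ ℝ
  | 0 => 0
  | 1 => 0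
  | 2 => 0
  | (n + 3) => Apoly (n + 2) + Lop (Rpoly (n + 2)) + Hop (Rpoly (n + 2))

/-- The monomial `T_α = T_{α₁} ⋯ T_{α_r}` attached to a tuple (multiset) `α`. -/
def Tmon (α : Multiset ℕ) : MvPolynomial ℕ ℝ := (α.map X).prod

/-- `c_α^{(n)}`: the coefficient of the monomial `T_α` in `R_n`. -/
def coeffR (n : ℕ) (α : Multiset ℕ) : ℝ :=
  MvPolynomial.coeff (Multiset.toFinsupp α) (Rpoly n)

/-- `l_{β,α}`: the coefficient of `T_α` in `L(T_β)`. -/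
def lcoef (β α : Multiset ℕ) : ℝ :=
  MvPolynomial.coeff (Multiset.toFinsupp α) (Lop (Tmon β))

/-- `h_{β,α}`: the coefficient of `T_α` in `H(T_β)`. -/
def hcoef (β α : Multiset ℕ) : ℝ :=
  MvPolynomial.coeff (Multiset.toFinsupp α) (Hop (Tmon β))

/-- `I_{r,n}`: partitions of `2n` of length `r` with parts between `2` and `n-1`. -/
def Ipart (r n : ℕ) : Finset (Multiset ℕ) :=
  ((Finset.univ : Finset (Nat.Partition (2 * n))).image Nat.Partition.parts).filter
    (fun m => Multiset.card m = r ∧ ∀ a ∈ m, 2 ≤ a ∧ a ≤ n - 1)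

/-- `I_n`: partitions of `2n` of length between `3` and `n`, parts between `2` and `n-1`. -/
def IpartAll (n : ℕ) : Finset (Multiset ℕ) :=
  ((Finset.univ : Finset (Nat.Partition (2 * n))).image Nat.Partition.parts).filter
    (fun m => 3 ≤ Multiset.card m ∧ Multiset.card m ≤ n ∧ ∀ a ∈ m, 2 ≤ a ∧ a ≤ n - 1)

/-- The polynomial `a_{n,k}`. -/
def ank (n k : ℕ) : MvPolynomial ℕ ℝ :=
  ∑ α ∈ (IpartAll (n + 1)).filter (fun α => (n - k) ∈ α ∧ ∀ a ∈ α, a ≤ n - k),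
    C (coeffR (n + 1) α) * Tmon (α.erase (n - k))

/-- The polynomial `a_n = a_{n,0} - c_{(n,n,2)}^{(n+1)} T_2 T_n`. -/
def aform (n : ℕ) : MvPolynomial ℕ ℝ :=
  ank n 0 - C (coeffR (n + 1) {n, n, 2}) * (X 2 * X n)

namespace P17

abbrev sg (i : ℕ) : ℕ →₀ ℕ := Finsupp.single i 1

/-- target exponent: `T_2 T_m^2`. -/
def tt (m : ℕ) : ℕ →₀ ℕ := Finsupp.single 2 1 + Finsupp.single m 2

/-- intermediate exponent `T_2 T_{m-1} T_m`. -/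
def uu (m : ℕ) : ℕ →₀ ℕ := sg 2 + sg (m - 1) + sg m

/-- `T_2 T_{m-2} T_m`. -/
def dpr (m : ℕ) : ℕ →₀ ℕ := sg 2 + sg (m - 2) + sg m

/-- length (number of parts) -/
def len (d : ℕ →₀ ℕ) : ℕ := d.sum fun _ v => v

/-- invariant on exponent vectors occurring in `R_n` -/
def Inv (d : ℕ →₀ ℕ) : Prop := (∀ j ∈ d.support, 2 ≤ j) ∧ 3 ≤ len d

lemma coeff_extendMon (f : (ℕ →₀ ℕ) → MvPolynomial ℕ ℝ) (P : MvPolynomial ℕ ℝ) (t : ℕ →₀ ℕ) :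
    coeff t (extendMon f P) = ∑ d ∈ P.support, P.coeff d * coeff t (f d) := by
  unfold extendMon
  rw [coeff_sum]
  exact Finset.sum_congr rfl fun d _ => by rw [coeff_smul, smul_eq_mul]

lemma coeff_extendMon_eq_zero {f : (ℕ →₀ ℕ) → MvPolynomial ℕ ℝ} {P : MvPolynomial ℕ ℝ}
    {t : ℕ →₀ ℕ} (h : ∀ d ∈ P.support, coeff t (f d) = 0) :
    coeff t (extendMon f P) = 0 := by
  rw [coeff_extendMon]
  exact Finset.sum_eq_zero fun d hd => by rw [h d hd, mul_zero]

lemma mem_support_extendMon {f : (ℕ →₀ ℕ) → MvPolynomial ℕ ℝ} {P : MvPolynomial ℕ ℝ}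
    {v : ℕ →₀ ℕ} (h : v ∈ (extendMon f P).support) :
    ∃ d ∈ P.support, v ∈ (f d).support := by
  by_contra hc
  push_neg at hc
  exact MvPolynomial.mem_support_iff.mp h
    (coeff_extendMon_eq_zero fun d hd => MvPolynomial.notMem_support_iff.mp (hc d hd))

lemma extendMon_zero (f : (ℕ →₀ ℕ) → MvPolynomial ℕ ℝ) : extendMon f 0 = 0 := by
  simp [extendMon]

lemma extendMon_monomial (f : (ℕ →₀ ℕ) → MvPolynomial ℕ ℝ) (d : ℕ →₀ ℕ) {c : ℝ} (hc : c ≠ 0) :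
    extendMon f (monomial d c) = c • f d := by
  unfold extendMon
  rw [support_monomial, if_neg hc, Finset.sum_singleton]
  rw [show (monomial d c).coeff d = c from by rw [coeff_monomial, if_pos rfl]]

end P17
namespace P17

lemma coeff_D1mon (d t : ℕ →₀ ℕ) :
    coeff t (D1mon d) = ∑ i ∈ d.support,
      (d i : ℝ) * (if d - sg i + sg (i + 1) = t then 1 else 0) := by
  unfold D1mon
  rw [coeff_sum]
  exact Finset.sum_congr rfl fun i _ => by rw [coeff_smul, coeff_monomial, smul_eq_mul]

lemma coeff_D2mon (d t : ℕ →₀ ℕ) :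
    coeff t (D2mon d) = ∑ i ∈ d.support,
      (d i : ℝ) * (if d - sg i + sg (i + 2) = t then 1 else 0) := by
  unfold D2mon
  rw [coeff_sum]
  exact Finset.sum_congr rfl fun i _ => by rw [coeff_smul, coeff_monomial, smul_eq_mul]

lemma coeff_Hmon (d t : ℕ →₀ ℕ) :
    coeff t (Hmon d) = (-(1/2) : ℝ) * ∑ i ∈ d.support, ∑ l ∈ Finset.Ico 1 i,
      ((d i : ℝ) * (i.choose l : ℝ)) *
        (if d - sg i + sg (1 + l) + sg (1 + i - l) = t then 1 else 0) := by
  unfold Hmon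
  rw [coeff_smul, smul_eq_mul]
  congr 1
  rw [coeff_sum]
  refine Finset.sum_congr rfl fun i _ => ?_
  rw [coeff_sum]
  exact Finset.sum_congr rfl fun l _ => by rw [coeff_smul, coeff_monomial, smul_eq_mul]

lemma mem_support_D1mon {d v : ℕ →₀ ℕ} (h : v ∈ (D1mon d).support) :
    ∃ i ∈ d.support, v = d - sg i + sg (i + 1) := by
  unfold D1mon at h
  obtain ⟨i, hi, hv⟩ := Finset.mem_biUnion.mp (support_sum h)
  refine ⟨i, hi, ?_⟩
  have := support_smul hv
  rw [support_monomial, if_neg one_ne_zero] at this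
  exact Finset.mem_singleton.mp this

lemma mem_support_D2mon {d v : ℕ →₀ ℕ} (h : v ∈ (D2mon d).support) :
    ∃ i ∈ d.support, v = d - sg i + sg (i + 2) := by
  unfold D2mon at h
  obtain ⟨i, hi, hv⟩ := Finset.mem_biUnion.mp (support_sum h)
  refine ⟨i, hi, ?_⟩
  have := support_smul hv
  rw [support_monomial, if_neg one_ne_zero] at this
  exact Finset.mem_singleton.mp this

lemma mem_support_Hmon {d v : ℕ →₀ ℕ} (h : v ∈ (Hmon d).support) :
    ∃ i ∈ d.support, ∃ l ∈ Finset.Ico 1 i, v = d - sg i + sg (1 + l) + sg (1 + i - l) := by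
  unfold Hmon at h
  have h1 := support_smul h
  obtain ⟨i, hi, hv⟩ := Finset.mem_biUnion.mp (support_sum h1)
  obtain ⟨l, hl, hv2⟩ := Finset.mem_biUnion.mp (support_sum hv)
  refine ⟨i, hi, l, hl, ?_⟩
  have := support_smul hv2
  rw [support_monomial, if_neg one_ne_zero] at this
  exact Finset.mem_singleton.mp this

end P17
namespace P17

lemma len_add (a b : ℕ →₀ ℕ) : len (a + b) = len a + len b :=
  Finsupp.sum_add_index' (fun _ => rfl) (fun _ _ _ => rfl)

lemma len_single (i k : ℕ) : len (Finsupp.single i k) = k :=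
  Finsupp.sum_single_index rfl

lemma sub_add_cancel_of_mem {d : ℕ →₀ ℕ} {i : ℕ} (h : i ∈ d.support) :
    d - sg i + sg i = d :=
  tsub_add_cancel_of_le (Finsupp.single_le_iff.mpr
    (Nat.one_le_iff_ne_zero.mpr (Finsupp.mem_support_iff.mp h)))

lemma len_sub_add {d : ℕ →₀ ℕ} {i : ℕ} (h : i ∈ d.support) (k : ℕ) :
    len (d - sg i + sg k) = len d := by
  have h1 : len (d - sg i) + 1 = len d := by
    conv_rhs => rw [← sub_add_cancel_of_mem h]
    rw [len_add, len_single]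
  rw [len_add, len_single, h1]

lemma support_sub_add_subset (d : ℕ →₀ ℕ) (i k : ℕ) :
    (d - sg i + sg k).support ⊆ d.support ∪ {k} := by
  refine Finsupp.support_add.trans (Finset.union_subset_union ?_ Finsupp.support_single_subset)
  exact Finsupp.support_tsub

lemma inv_step {d : ℕ →₀ ℕ} {i k : ℕ} (hd : Inv d) (hi : i ∈ d.support) (hk : 2 ≤ k) :
    Inv (d - sg i + sg k) := by
  constructor
  · intro j hj
    rcases Finset.mem_union.mp (support_sub_add_subset d i k hj) with h | h
    · exact hd.1 j h
    · rw [Finset.mem_singleton.mp h]; exact hk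
  · rw [len_sub_add hi]; exact hd.2

lemma inv_step2 {d : ℕ →₀ ℕ} {i a b : ℕ} (hd : Inv d) (hi : i ∈ d.support)
    (ha : 2 ≤ a) (hb : 2 ≤ b) : Inv (d - sg i + sg a + sg b) := by
  have h1 := inv_step hd hi ha
  constructor
  · intro j hj
    rcases Finset.mem_union.mp (Finsupp.support_add.trans
      (Finset.union_subset_union (subset_refl _) Finsupp.support_single_subset) hj) with h | h
    · exact h1.1 j h
    · rw [Finset.mem_singleton.mp h]; exact hb
  · have := h1.2
    rw [len_add, len_single]; omega
    
lemma XXX (a b c : ℕ) : (X a * X b * X c : MvPolynomial ℕ ℝ) = monomial (sg a + sg b + sg c) 1 := by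
  rw [X, X, X, monomial_mul, monomial_mul, one_mul, one_mul]

lemma inv_Apoly {m : ℕ} (hm : 2 ≤ m) {v : ℕ →₀ ℕ} (hv : v ∈ (Apoly m).support) : Inv v := by
  unfold Apoly at hv
  rw [support_neg] at hv
  obtain ⟨k, hk, hv2⟩ := Finset.mem_biUnion.mp (support_sum hv)
  rw [Finset.mem_Ico] at hk
  have h1 := support_smul hv2
  rw [XXX, support_monomial, if_neg one_ne_zero] at h1
  have hveq := Finset.mem_singleton.mp h1
  subst hveq
  constructor
  · intro j hj
    rcases Finset.mem_union.mp (Finsupp.support_add.trans (Finset.union_subset_union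
        (Finsupp.support_add.trans (Finset.union_subset_union Finsupp.support_single_subset
          Finsupp.support_single_subset)) Finsupp.support_single_subset) hj) with h | h
    · rcases Finset.mem_union.mp h with h' | h' <;> rw [Finset.mem_singleton.mp h'] <;> omega
    · rw [Finset.mem_singleton.mp h]; omega
  · rw [len_add, len_add, len_single, len_single, len_single]

lemma inv_R : ∀ m : ℕ, ∀ d ∈ (Rpoly m).support, Inv d
  | 0 => by simp [Rpoly]
  | 1 => by simp [Rpoly]
  | 2 => by simp [Rpoly]
  | (n + 3) => by
    intro d hd
    have IH := inv_R (n + 2)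
    rw [show Rpoly (n+3) = Apoly (n+2) + Lop (Rpoly (n+2)) + Hop (Rpoly (n+2)) from rfl] at hd
    rcases Finset.mem_union.mp (support_add hd) with h | h
    · rcases Finset.mem_union.mp (support_add h) with h' | h'
      · exact inv_Apoly (by omega) h'
      · -- Lop
        unfold Lop at h'
        have h2 := support_smul h'
        rcases Finset.mem_union.mp (support_sub ℕ _ _ h2) with h3 | h3
        · obtain ⟨e, he, h4⟩ := mem_support_extendMon h3
          obtain ⟨d1, hd1, h5⟩ := mem_support_extendMon he
          obtain ⟨i, hi, h6⟩ := mem_support_D1mon h5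
          obtain ⟨i2, hi2, h7⟩ := mem_support_D1mon h4
          have invd1 := IH d1 hd1
          have inve : Inv e := h6 ▸ inv_step invd1 hi (by have := invd1.1 i hi; omega)
          rw [h7]; exact inv_step inve hi2 (by have := inve.1 i2 hi2; omega)
        · obtain ⟨d1, hd1, h4⟩ := mem_support_extendMon h3
          obtain ⟨i, hi, h5⟩ := mem_support_D2mon h4
          have invd1 := IH d1 hd1
          rw [h5]; exact inv_step invd1 hi (by have := invd1.1 i hi; omega)
    · -- Hop
      obtain ⟨d1, hd1, h4⟩ := mem_support_extendMon h
      obtain ⟨i, hi, l, hl, h5⟩ := mem_support_Hmon h4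
      have invd1 := IH d1 hd1
      rw [Finset.mem_Ico] at hl
      have hii := invd1.1 i hi
      rw [h5]; exact inv_step2 invd1 hi (by omega) (by omega)

end P17
namespace P17

lemma D1_cond_t {m : ℕ} (hm : 4 ≤ m) {e : ℕ →₀ ℕ} (hInv : Inv e) {i : ℕ} (hi : i ∈ e.support)
    (h : e - sg i + sg (i + 1) = tt m) : e = uu m ∧ i = m - 1 := by
  have hei : 1 ≤ e i := Nat.one_le_iff_ne_zero.mpr (Finsupp.mem_support_iff.mp hi)
  have hi2 : 2 ≤ i := hInv.1 i hi
  have H : ∀ j, e j - (if i = j then 1 else 0) + (if i + 1 = j then 1 else 0)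
      = (if 2 = j then 1 else 0) + (if m = j then 2 else 0) := by
    intro j
    have h1 := congrArg (fun f : ℕ →₀ ℕ => f j) h
    simpa only [tt, sg, Finsupp.add_apply, Finsupp.tsub_apply, Finsupp.single_apply] using h1
  have him : i = m - 1 := by
    have h1 := H (i + 1)
    split_ifs at h1 <;> omega
  refine ⟨Finsupp.ext fun j => ?_, him⟩
  have h1 := H j
  simp only [uu, sg, Finsupp.add_apply, Finsupp.single_apply]
  rcases eq_or_ne j i with rfl | hji
  · split_ifs at h1 ⊢ <;> omega
  · split_ifs at h1 ⊢ <;> omega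

lemma D1_cond_u {m : ℕ} (hm : 4 ≤ m) {d : ℕ →₀ ℕ} (hInv : Inv d) {i : ℕ} (hi : i ∈ d.support)
    (h : d - sg i + sg (i + 1) = uu m) :
    (d = tt (m - 1) ∧ i = m - 1) ∨ (d = dpr m ∧ i = m - 2) := by
  have hei : 1 ≤ d i := Nat.one_le_iff_ne_zero.mpr (Finsupp.mem_support_iff.mp hi)
  have hi2 : 2 ≤ i := hInv.1 i hi
  have H : ∀ j, d j - (if i = j then 1 else 0) + (if i + 1 = j then 1 else 0)
      = (if 2 = j then 1 else 0) + ((if m - 1 = j then 1 else 0) + (if m = j then 1 else 0)) := by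
    intro j
    have h1 := congrArg (fun f : ℕ →₀ ℕ => f j) h
    simpa only [uu, sg, Finsupp.add_apply, Finsupp.tsub_apply, Finsupp.single_apply,
      add_assoc] using h1
  rcases eq_or_ne i (m - 1) with him | him
  · left
    refine ⟨Finsupp.ext fun j => ?_, him⟩
    have h1 := H j
    simp only [tt, sg, Finsupp.add_apply, Finsupp.single_apply]
    rcases eq_or_ne j i with rfl | hji
    · split_ifs at h1 ⊢ <;> omega
    · split_ifs at h1 ⊢ <;> omega
  · rcases eq_or_ne i (m - 2) with him2 | him2
    · right
      refine ⟨Finsupp.ext fun j => ?_, him2⟩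
      have h1 := H j
      simp only [dpr, sg, Finsupp.add_apply, Finsupp.single_apply]
      rcases eq_or_ne j i with rfl | hji
      · split_ifs at h1 ⊢ <;> omega
      · split_ifs at h1 ⊢ <;> omega
    · exfalso
      have h1 := H (i + 1)
      split_ifs at h1 <;> omega

lemma D2_cond_t {m : ℕ} (hm : 4 ≤ m) {d : ℕ →₀ ℕ} (hInv : Inv d) {i : ℕ} (hi : i ∈ d.support)
    (h : d - sg i + sg (i + 2) = tt m) : d = dpr m ∧ i = m - 2 := by
  have hei : 1 ≤ d i := Nat.one_le_iff_ne_zero.mpr (Finsupp.mem_support_iff.mp hi)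
  have hi2 : 2 ≤ i := hInv.1 i hi
  have H : ∀ j, d j - (if i = j then 1 else 0) + (if i + 2 = j then 1 else 0)
      = (if 2 = j then 1 else 0) + (if m = j then 2 else 0) := by
    intro j
    have h1 := congrArg (fun f : ℕ →₀ ℕ => f j) h
    simpa only [tt, sg, Finsupp.add_apply, Finsupp.tsub_apply, Finsupp.single_apply] using h1
  have him : i = m - 2 := by
    have h1 := H (i + 2)
    split_ifs at h1 <;> omega
  refine ⟨Finsupp.ext fun j => ?_, him⟩
  have h1 := H j
  simp only [dpr, sg, Finsupp.add_apply, Finsupp.single_apply]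
  rcases eq_or_ne j i with rfl | hji
  · split_ifs at h1 ⊢ <;> omega
  · split_ifs at h1 ⊢ <;> omega

lemma uu_step {m : ℕ} (hm : 4 ≤ m) : uu m - sg (m - 1) + sg m = tt m := by
  refine Finsupp.ext fun j => ?_
  simp only [uu, tt, sg, Finsupp.add_apply, Finsupp.tsub_apply, Finsupp.single_apply]
  split_ifs <;> omega

lemma dstar_step {m : ℕ} (hm : 4 ≤ m) : tt (m - 1) - sg (m - 1) + sg m = uu m := by
  refine Finsupp.ext fun j => ?_
  simp only [uu, tt, sg, Finsupp.add_apply, Finsupp.tsub_apply, Finsupp.single_apply]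
  split_ifs <;> omega

lemma dpr_step {m : ℕ} (hm : 4 ≤ m) : dpr m - sg (m - 2) + sg (m - 1) = uu m := by
  refine Finsupp.ext fun j => ?_
  simp only [uu, dpr, sg, Finsupp.add_apply, Finsupp.tsub_apply, Finsupp.single_apply]
  split_ifs <;> omega

lemma dpr_step2 {m : ℕ} (hm : 4 ≤ m) : dpr m - sg (m - 2) + sg m = tt m := by
  refine Finsupp.ext fun j => ?_
  simp only [tt, dpr, sg, Finsupp.add_apply, Finsupp.tsub_apply, Finsupp.single_apply]
  split_ifs <;> omega

lemma uu_apply (m j : ℕ) : uu m j = (if 2 = j then 1 else 0) + (if m - 1 = j then 1 else 0)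
    + (if m = j then 1 else 0) := by
  simp only [uu, sg, Finsupp.add_apply, Finsupp.single_apply]

lemma tt_apply (k j : ℕ) : tt k j = (if 2 = j then 1 else 0) + (if k = j then 2 else 0) := by
  simp only [tt, Finsupp.add_apply, Finsupp.single_apply]

lemma dpr_apply (m j : ℕ) : dpr m j = (if 2 = j then 1 else 0) + (if m - 2 = j then 1 else 0)
    + (if m = j then 1 else 0) := by
  simp only [dpr, sg, Finsupp.add_apply, Finsupp.single_apply]

lemma inv_uu {m : ℕ} (hm : 4 ≤ m) : Inv (uu m) := by
  constructor
  · intro j hj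
    have h := Finsupp.mem_support_iff.mp hj
    rw [uu_apply] at h
    split_ifs at h <;> omega
  · unfold uu
    rw [len_add, len_add, len_single, len_single, len_single]

lemma inv_tt {m : ℕ} (hm : 4 ≤ m) : Inv (tt (m - 1)) := by
  constructor
  · intro j hj
    have h := Finsupp.mem_support_iff.mp hj
    rw [tt_apply] at h
    split_ifs at h <;> omega
  · unfold tt
    rw [len_add, len_single, len_single]

lemma inv_dpr {m : ℕ} (hm : 4 ≤ m) : Inv (dpr m) := by
  constructor
  · intro j hj
    have h := Finsupp.mem_support_iff.mp hj
    rw [dpr_apply] at h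
    split_ifs at h <;> omega
  · unfold dpr
    rw [len_add, len_add, len_single, len_single, len_single]

end P17
namespace P17

lemma sum_coeff_ite (R : MvPolynomial ℕ ℝ) (a : ℕ →₀ ℕ) (v : ℝ) :
    (∑ d ∈ R.support, R.coeff d * (if d = a then v else 0)) = R.coeff a * v := by
  simp only [mul_ite, mul_zero]
  rw [Finset.sum_ite_eq' R.support a (fun d => R.coeff d * v)]
  split_ifs with h
  · rfl
  · rw [MvPolynomial.notMem_support_iff.mp h, zero_mul]

lemma tt_ne_dpr {m : ℕ} (hm : 4 ≤ m) : tt (m - 1) ≠ dpr m := by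
  intro h
  have := congrArg (fun f : ℕ →₀ ℕ => f m) h
  simp only [tt_apply, dpr_apply] at this
  split_ifs at this <;> omega

lemma coeff_Apoly_tt {m : ℕ} (hm : 3 ≤ m) : coeff (tt m) (Apoly m) = -(2 * m : ℝ) := by
  unfold Apoly
  rw [coeff_neg, coeff_sum]
  have key : ∀ k ∈ Finset.Ico 1 m,
      coeff (tt m) ((m.choose k : ℝ) • (X (1 + k) * X (1 + m - k) * X m))
      = (if k = 1 then (m : ℝ) else 0) + (if k = m - 1 then (m : ℝ) else 0) := by
    intro k hk
    rw [Finset.mem_Ico] at hk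
    rw [XXX, coeff_smul, coeff_monomial, smul_eq_mul]
    rcases eq_or_ne k 1 with rfl | hk1
    · rw [if_pos, if_pos rfl, if_neg (by omega), add_zero, mul_one, Nat.choose_one_right]
      refine Finsupp.ext fun j => ?_
      simp only [tt, sg, Finsupp.add_apply, Finsupp.single_apply]
      split_ifs <;> omega
    · rcases eq_or_ne k (m - 1) with rfl | hk2
      · rw [if_pos, if_neg hk1, if_pos rfl, zero_add, mul_one]
        · rw [show m - 1 = m - 1 from rfl, Nat.choose_symm (by omega : 1 ≤ m),
            Nat.choose_one_right]
        · refine Finsupp.ext fun j => ?_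
          simp only [tt, sg, Finsupp.add_apply, Finsupp.single_apply]
          split_ifs <;> omega
      · rw [if_neg, if_neg hk1, if_neg hk2, add_zero, mul_zero]
        intro hcond
        have := congrArg (fun f : ℕ →₀ ℕ => f 2) hcond
        simp only [tt, sg, Finsupp.add_apply, Finsupp.single_apply] at this
        split_ifs at this <;> omega
  rw [Finset.sum_congr rfl key, Finset.sum_add_distrib,
    Finset.sum_ite_eq' _ 1 (fun _ => (m : ℝ)), Finset.sum_ite_eq' _ (m - 1) (fun _ => (m : ℝ)),
    if_pos (Finset.mem_Ico.mpr ⟨le_refl 1, by omega⟩),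
    if_pos (Finset.mem_Ico.mpr ⟨by omega, by omega⟩)]
  ring

lemma coeff_Hop_tt {m : ℕ} {R : MvPolynomial ℕ ℝ} (hR : ∀ d ∈ R.support, Inv d) :
    coeff (tt m) (Hop R) = 0 := by
  refine coeff_extendMon_eq_zero fun d hd => ?_
  rw [coeff_Hmon]
  rw [Finset.sum_eq_zero, mul_zero]
  intro i hi
  refine Finset.sum_eq_zero fun l hl => ?_
  rw [if_neg, mul_zero]
  intro hcond
  have hlen := congrArg len hcond
  rw [len_add, len_sub_add hi, len_single] at hlen
  have h3 := (hR d hd).2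
  have : len (tt m) = 3 := by unfold tt; rw [len_add, len_single, len_single]
  omega

lemma coeff_D2op_tt {m : ℕ} (hm : 4 ≤ m) {R : MvPolynomial ℕ ℝ} (hR : ∀ d ∈ R.support, Inv d) :
    coeff (tt m) (D2op R) = R.coeff (dpr m) * ((dpr m) (m - 2) : ℝ) := by
  unfold D2op
  rw [coeff_extendMon]
  have key : ∀ d ∈ R.support, coeff (tt m) (D2mon d)
      = if d = dpr m then ((dpr m) (m - 2) : ℝ) else 0 := by
    intro d hd
    rw [coeff_D2mon]
    rcases eq_or_ne d (dpr m) with rfl | hne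
    · rw [if_pos rfl]
      rw [Finset.sum_eq_single (m - 2)]
      · rw [show m - 2 + 2 = m from by omega, if_pos (dpr_step2 hm), mul_one]
      · intro i hi hne2
        rw [if_neg, mul_zero]
        intro hcond
        exact hne2 (D2_cond_t hm (inv_dpr hm) hi hcond).2
      · intro habs
        rw [Finsupp.notMem_support_iff.mp habs, Nat.cast_zero, zero_mul]
    · rw [if_neg hne]
      refine Finset.sum_eq_zero fun i hi => ?_
      rw [if_neg, mul_zero]
      intro hcond
      exact hne (D2_cond_t hm (hR d hd) hi hcond).1
  rw [Finset.sum_congr rfl fun d hd => by rw [key d hd], sum_coeff_ite]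

lemma coeff_D1mon_t {m : ℕ} (hm : 4 ≤ m) {e : ℕ →₀ ℕ} (hInv : Inv e) :
    coeff (tt m) (D1mon e) = if e = uu m then 1 else 0 := by
  rw [coeff_D1mon]
  rcases eq_or_ne e (uu m) with rfl | hne
  · rw [if_pos rfl]
    rw [Finset.sum_eq_single (m - 1)]
    · rw [show m - 1 + 1 = m from by omega, if_pos (uu_step hm)]
      have : (uu m) (m - 1) = 1 := by rw [uu_apply]; split_ifs <;> omega
      rw [this, Nat.cast_one, one_mul]
    · intro i hi hne2
      rw [if_neg, mul_zero]
      intro hcond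
      exact hne2 (D1_cond_t hm (inv_uu hm) hi hcond).2
    · intro habs
      exfalso
      refine habs (Finsupp.mem_support_iff.mpr ?_)
      rw [uu_apply]
      split_ifs <;> omega
  · rw [if_neg hne]
    refine Finset.sum_eq_zero fun i hi => ?_
    rw [if_neg, mul_zero]
    intro hcond
    exact hne (D1_cond_t hm hInv hi hcond).1

lemma coeff_D1mon_u {m : ℕ} (hm : 4 ≤ m) {d : ℕ →₀ ℕ} (hInv : Inv d) :
    coeff (uu m) (D1mon d) = (if d = tt (m - 1) then 2 else 0)
      + (if d = dpr m then ((dpr m) (m - 2) : ℝ) else 0) := by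
  rw [coeff_D1mon]
  rcases eq_or_ne d (tt (m - 1)) with rfl | hne1
  · rw [if_pos rfl, if_neg (tt_ne_dpr hm), add_zero]
    rw [Finset.sum_eq_single (m - 1)]
    · rw [show m - 1 + 1 = m from by omega, if_pos (dstar_step hm)]
      have : (tt (m - 1)) (m - 1) = 2 := by rw [tt_apply]; split_ifs <;> omega
      rw [this, mul_one, Nat.cast_ofNat]
    · intro i hi hne2
      rw [if_neg, mul_zero]
      intro hcond
      rcases D1_cond_u hm (inv_tt hm) hi hcond with ⟨_, h2⟩ | ⟨h1, _⟩
      · exact hne2 h2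
      · exact tt_ne_dpr hm h1
    · intro habs
      exfalso
      refine habs (Finsupp.mem_support_iff.mpr ?_)
      rw [tt_apply]
      split_ifs <;> omega
  · rcases eq_or_ne d (dpr m) with rfl | hne2
    · rw [if_neg hne1, if_pos rfl, zero_add]
      rw [Finset.sum_eq_single (m - 2)]
      · rw [show m - 2 + 1 = m - 1 from by omega, if_pos (dpr_step hm), mul_one]
      · intro i hi hne3
        rw [if_neg, mul_zero]
        intro hcond
        rcases D1_cond_u hm (inv_dpr hm) hi hcond with ⟨h1, _⟩ | ⟨_, h2⟩
        · exact absurd h1.symm (tt_ne_dpr hm)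
        · exact hne3 h2
      · intro habs
        rw [Finsupp.notMem_support_iff.mp habs, Nat.cast_zero, zero_mul]
    · rw [if_neg hne1, if_neg hne2, add_zero]
      refine Finset.sum_eq_zero fun i hi => ?_
      rw [if_neg, mul_zero]
      intro hcond
      rcases D1_cond_u hm hInv hi hcond with ⟨h1, _⟩ | ⟨h1, _⟩
      · exact hne1 h1
      · exact hne2 h1

end P17
namespace P17

lemma coeff_D1op_uu {m : ℕ} (hm : 4 ≤ m) {R : MvPolynomial ℕ ℝ}
    (hR : ∀ d ∈ R.support, Inv d) :
    coeff (uu m) (D1op R) = R.coeff (tt (m - 1)) * 2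
      + R.coeff (dpr m) * ((dpr m) (m - 2) : ℝ) := by
  unfold D1op
  rw [coeff_extendMon]
  rw [Finset.sum_congr rfl fun d hd => by rw [coeff_D1mon_u hm (hR d hd)]]
  simp only [mul_add]
  rw [Finset.sum_add_distrib, sum_coeff_ite, sum_coeff_ite]

lemma coeff_D1op_D1op_tt {m : ℕ} (hm : 4 ≤ m) {R : MvPolynomial ℕ ℝ}
    (hR : ∀ d ∈ R.support, Inv d) :
    coeff (tt m) (D1op (D1op R)) = R.coeff (tt (m - 1)) * 2
      + R.coeff (dpr m) * ((dpr m) (m - 2) : ℝ) := by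
  have hQ : ∀ e ∈ (D1op R).support, Inv e := by
    intro e he
    obtain ⟨d, hd, hfd⟩ := mem_support_extendMon he
    obtain ⟨i, hi, rfl⟩ := mem_support_D1mon hfd
    exact inv_step (hR d hd) hi (by have := (hR d hd).1 i hi; omega)
  conv_lhs => rw [show D1op (D1op R) = extendMon D1mon (D1op R) from rfl]
  rw [coeff_extendMon]
  rw [Finset.sum_congr rfl fun e he => by rw [coeff_D1mon_t hm (hQ e he)]]
  rw [sum_coeff_ite, mul_one]
  exact coeff_D1op_uu hm hR

lemma coeff_Lop_tt {m : ℕ} (hm : 4 ≤ m) {R : MvPolynomial ℕ ℝ}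
    (hR : ∀ d ∈ R.support, Inv d) :
    coeff (tt m) (Lop R) = R.coeff (tt (m - 1)) := by
  unfold Lop
  rw [coeff_smul, coeff_sub, coeff_D1op_D1op_tt hm hR, coeff_D2op_tt hm hR, smul_eq_mul]
  ring

lemma step {m : ℕ} (hm : 4 ≤ m) :
    coeff (tt m) (Rpoly (m + 1)) = -(2 * m : ℝ) + coeff (tt (m - 1)) (Rpoly m) := by
  obtain ⟨k, rfl⟩ : ∃ k, m = k + 4 := ⟨m - 4, by omega⟩
  have hR := inv_R (k + 4)
  rw [show Rpoly (k + 4 + 1) = Apoly (k + 4) + Lop (Rpoly (k + 4)) + Hop (Rpoly (k + 4)) from rfl]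
  rw [coeff_add, coeff_add, coeff_Apoly_tt (by omega), coeff_Lop_tt (by omega) hR,
    coeff_Hop_tt hR, add_zero]

end P17
namespace P17

def d0 : ℕ →₀ ℕ := Finsupp.single 2 3
def v1 : ℕ →₀ ℕ := Finsupp.single 2 2 + Finsupp.single 3 1

lemma R3_eq : Rpoly 3 = monomial d0 (-2 : ℝ) := by
  rw [show Rpoly 3 = Apoly 2 + Lop (Rpoly 2) + Hop (Rpoly 2) from rfl,
    show Rpoly 2 = 0 from rfl]
  unfold Lop Hop D1op D2op
  rw [extendMon_zero, extendMon_zero, extendMon_zero, extendMon_zero]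
  rw [sub_zero, smul_zero, add_zero, add_zero]
  unfold Apoly
  rw [show Finset.Ico 1 2 = {1} from rfl, Finset.sum_singleton, XXX]
  rw [show sg 2 + sg 2 + sg 2 = d0 from by
    refine Finsupp.ext fun j => ?_
    simp only [d0, sg, Finsupp.add_apply, Finsupp.single_apply]
    split_ifs <;> omega]
  rw [smul_monomial]
  rw [← map_neg]
  norm_num

lemma support_R3 : (Rpoly 3).support = {d0} := by
  rw [R3_eq, support_monomial, if_neg (by norm_num)]

lemma coeff_R3 : (Rpoly 3).coeff d0 = -2 := by
  rw [R3_eq, coeff_monomial, if_pos rfl]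

lemma supp_d0 : d0.support = {2} := Finsupp.support_single_ne_zero 2 (by norm_num)

lemma D1op_R3 : D1op (Rpoly 3) = monomial v1 (-6 : ℝ) := by
  rw [R3_eq]
  unfold D1op
  rw [extendMon_monomial _ _ (by norm_num : (-2 : ℝ) ≠ 0)]
  unfold D1mon
  rw [supp_d0, Finset.sum_singleton]
  rw [show d0 - sg 2 + sg (2 + 1) = v1 from by
    refine Finsupp.ext fun j => ?_
    simp only [d0, v1, sg, Finsupp.add_apply, Finsupp.tsub_apply, Finsupp.single_apply]
    split_ifs <;> omega]
  rw [show ((d0 2 : ℝ)) = 3 from by rw [show d0 2 = 3 from Finsupp.single_eq_same]; norm_num]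
  rw [smul_smul, smul_monomial]
  norm_num

lemma v1_apply (j : ℕ) : v1 j = (if 2 = j then 2 else 0) + (if 3 = j then 1 else 0) := by
  simp only [v1, Finsupp.add_apply, Finsupp.single_apply]

lemma coeff_D1mon_v1 : coeff (tt 3) (D1mon v1) = 2 := by
  rw [coeff_D1mon]
  rw [Finset.sum_eq_single 2]
  · rw [show v1 2 = 2 from by simp [v1_apply], if_pos, Nat.cast_ofNat, mul_one]
    refine Finsupp.ext fun j => ?_
    simp only [tt, v1, sg, Finsupp.add_apply, Finsupp.tsub_apply, Finsupp.single_apply]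
    split_ifs <;> omega
  · intro i hi hne
    have hi3 : i = 3 := by
      have h := Finsupp.mem_support_iff.mp hi
      rw [v1_apply] at h
      split_ifs at h <;> omega
    subst hi3
    rw [if_neg, mul_zero]
    intro hcond
    have := congrArg (fun f : ℕ →₀ ℕ => f 4) hcond
    simp only [tt, v1, sg, Finsupp.add_apply, Finsupp.tsub_apply, Finsupp.single_apply] at this
    split_ifs at this <;> omega
  · intro habs
    exact absurd (Finsupp.mem_support_iff.mpr (by simp [v1_apply])) habs

lemma base : coeff (tt 3) (Rpoly 4) = -12 := by
  rw [show Rpoly 4 = Apoly 3 + Lop (Rpoly 3) + Hop (Rpoly 3) from rfl]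
  rw [coeff_add, coeff_add, coeff_Apoly_tt (by norm_num), coeff_Hop_tt (inv_R 3), add_zero]
  have hD2 : coeff (tt 3) (D2op (Rpoly 3)) = 0 := by
    rw [R3_eq]
    unfold D2op
    rw [extendMon_monomial _ _ (by norm_num : (-2 : ℝ) ≠ 0), coeff_smul]
    unfold D2mon
    rw [supp_d0, Finset.sum_singleton, coeff_smul, coeff_monomial, if_neg, smul_zero, smul_zero]
    intro hcond
    have := congrArg (fun f : ℕ →₀ ℕ => f 4) hcond
    simp only [tt, d0, sg, Finsupp.add_apply, Finsupp.tsub_apply, Finsupp.single_apply] at this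
    split_ifs at this <;> omega
  have hD1 : coeff (tt 3) (D1op (D1op (Rpoly 3))) = -12 := by
    rw [D1op_R3]
    unfold D1op
    rw [extendMon_monomial _ _ (by norm_num : (-6 : ℝ) ≠ 0), coeff_smul, coeff_D1mon_v1]
    norm_num
  unfold Lop
  rw [coeff_smul, coeff_sub, hD1, hD2]
  norm_num

lemma main (n : ℕ) (hn : 3 ≤ n) : coeff (tt n) (Rpoly (n + 1)) = -((n : ℝ) * ((n : ℝ) + 1)) := by
  induction n, hn using Nat.le_induction with
  | base => rw [base]; norm_num
  | succ m hm ih =>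
    have h := step (m := m + 1) (by omega)
    rw [show m + 1 - 1 = m from rfl] at h
    rw [h, ih]
    push_cast
    ring

end P17
/-- The coefficient of `T_2 T_n²` in `R_{n+1}` equals `-n(n+1)`. -/
theorem statement17 (n : ℕ) (hn : 3 ≤ n) :
    coeffR (n + 1) ({n, n, 2} : Multiset ℕ) = -((n : ℝ) * ((n : ℝ) + 1)) := by
  have ht : Multiset.toFinsupp ({n, n, 2} : Multiset ℕ) = P17.tt n := by
    refine Finsupp.ext fun j => ?_
    rw [Multiset.toFinsupp_apply, P17.tt_apply]
    simp only [Multiset.insert_eq_cons, Multiset.count_cons, Multiset.count_singleton]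
    split_ifs <;> omega
  unfold coeffR
  rw [ht]
  exact P17.main n hn

end
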